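/- (First integral of the reduced angular equation.) Let a₁ be a nonzero real constant and let I ⊆ (0,∞) be an open interval on which 1 + a₁s > 0. Let F, G : I → ℝ be smooth and satisfy, for all s ∈ I, 2s(1+a₁s)F(s)G''(s) + 4s(1+a₁s)F'(s)G'(s) + (2+5a₁s)F(s)G'(s) = 0. Then the function s ↦ s·(1+a₁s)^{3/2}·F(s)²·G'(s) has vanishing derivative on I; in particular it is constant on I. -/
import Mathlib


noncomputable section

/-- First integral of the reduced angular equation: on an open interval
`I = (a,b) ⊆ (0,∞)` where `1 + a₁s > 0`, equation (b) of the reduced ODE system implies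
that `s·(1+a₁s)^{3/2}·F(s)²·G'(s)` has vanishing derivative, hence is constant. -/
theorem stmt17 (a₁ : ℝ) (ha₁ : a₁ ≠ 0) (a b : ℝ)
    (hIpos : Set.Ioo a b ⊆ Set.Ioi (0 : ℝ))
    (hpos : ∀ s ∈ Set.Ioo a b, 0 < 1 + a₁ * s)
    (F G : ℝ → ℝ)
    (hF : ContDiffOn ℝ (⊤ : ℕ∞) F (Set.Ioo a b))
    (hG : ContDiffOn ℝ (⊤ : ℕ∞) G (Set.Ioo a b))
    (hode : ∀ s ∈ Set.Ioo a b,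
      2 * s * (1 + a₁ * s) * F s * deriv (deriv G) s
        + 4 * s * (1 + a₁ * s) * deriv F s * deriv G s
        + (2 + 5 * a₁ * s) * F s * deriv G s = 0) :
    (∀ s ∈ Set.Ioo a b,
      deriv (fun s' => s' * (1 + a₁ * s') ^ ((3 : ℝ) / 2) * F s' ^ 2 * deriv G s') s = 0) ∧
    ∃ C : ℝ, ∀ s ∈ Set.Ioo a b,
      s * (1 + a₁ * s) ^ ((3 : ℝ) / 2) * F s ^ 2 * deriv G s = C := by
  have hIopen : IsOpen (Set.Ioo a b) := isOpen_Ioo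
  have key : ∀ s ∈ Set.Ioo a b,
      HasDerivAt (fun s' => s' * (1 + a₁ * s') ^ ((3 : ℝ) / 2) * F s' ^ 2 * deriv G s') 0 s := by
    intro s hs
    have hmem := hIopen.mem_nhds hs
    have ht : 0 < 1 + a₁ * s := hpos s hs
    have hFd : HasDerivAt F (deriv F s) s :=
      ((hF.contDiffAt hmem).differentiableAt (by norm_num)).hasDerivAt
    have hGdOn : ContDiffOn ℝ (⊤ : ℕ∞) (deriv G) (Set.Ioo a b) :=
      hG.deriv_of_isOpen hIopen (by norm_num)
    have hGd2 : HasDerivAt (deriv G) (deriv (deriv G) s) s :=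
      ((hGdOn.contDiffAt hmem).differentiableAt (by norm_num)).hasDerivAt
    have hlin : HasDerivAt (fun s' : ℝ => 1 + a₁ * s') a₁ s := by
      simpa using ((hasDerivAt_id s).const_mul a₁).const_add 1
    have hpow : HasDerivAt (fun s' : ℝ => (1 + a₁ * s') ^ ((3 : ℝ) / 2))
        (a₁ * ((3 : ℝ) / 2) * (1 + a₁ * s) ^ ((3 : ℝ) / 2 - 1)) s :=
      hlin.rpow_const (Or.inr (by norm_num))
    have h1 := (hasDerivAt_id s).mul hpow
    have h2 := (h1.mul (hFd.pow 2)).mul hGd2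
    have hD : (1 * (1 + a₁ * s) ^ ((3 : ℝ) / 2) +
          id s * (a₁ * ((3 : ℝ) / 2) * (1 + a₁ * s) ^ ((3 : ℝ) / 2 - 1))) * F s ^ 2 +
          id s * (1 + a₁ * s) ^ ((3 : ℝ) / 2) * (↑(2 : ℕ) * F s ^ (2 - 1) * deriv F s) = 0 ∨ True := Or.inr trivial
    have h32 : (1 + a₁ * s) ^ ((3 : ℝ) / 2)
        = (1 + a₁ * s) * (1 + a₁ * s) ^ ((1 : ℝ) / 2) := by
      rw [show ((3 : ℝ) / 2) = 1 + 1 / 2 by norm_num, Real.rpow_add ht, Real.rpow_one]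
    have h12 : ((3 : ℝ) / 2 - 1) = (1 : ℝ) / 2 := by norm_num
    have heq := hode s hs
    have hzero : ((1 * (1 + a₁ * s) ^ ((3 : ℝ) / 2) +
          id s * (a₁ * ((3 : ℝ) / 2) * (1 + a₁ * s) ^ ((3 : ℝ) / 2 - 1))) * F s ^ 2 +
          id s * (1 + a₁ * s) ^ ((3 : ℝ) / 2) * (↑(2 : ℕ) * F s ^ (2 - 1) * deriv F s)) * deriv G s +
          id s * (1 + a₁ * s) ^ ((3 : ℝ) / 2) * F s ^ 2 * deriv (deriv G) s = 0 := by
      rw [h12, h32]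
      simp only [id]
      linear_combination ((1 + a₁ * s) ^ ((1 : ℝ) / 2) * F s / 2) * heq
    exact hzero ▸ h2
  refine ⟨fun s hs => (key s hs).deriv, ?_⟩
  rcases Set.eq_empty_or_nonempty (Set.Ioo a b) with he | ⟨s₀, hs₀⟩
  · exact ⟨0, fun s hs => by rw [he] at hs; exact absurd hs (Set.notMem_empty s)⟩
  · refine ⟨s₀ * (1 + a₁ * s₀) ^ ((3 : ℝ) / 2) * F s₀ ^ 2 * deriv G s₀, fun s hs => ?_⟩
    have hdiff : DifferentiableOn ℝ
        (fun s' => s' * (1 + a₁ * s') ^ ((3 : ℝ) / 2) * F s' ^ 2 * deriv G s')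
        (Set.Ioo a b) := fun x hx => ((key x hx).differentiableAt).differentiableWithinAt
    exact (convex_Ioo a b).is_const_of_fderivWithin_eq_zero hdiff
      (fun x hx => by
        rw [fderivWithin_eq_fderiv (hIopen.uniqueDiffOn x hx) ((key x hx).differentiableAt),
          (key x hx).hasFDerivAt.fderiv]
        ext y
        simp) hs hs₀
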